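/- Let $A$ be a measurable set of finite positive measure, $u$ measurable, and $0 < \gamma \le 1/2$. Then $m_{|u - m_u^{\gamma}(A)|}^{\gamma}(A) \le 2 \inf_{c \in \mathbb{R}} m_{|u-c|}^{\gamma}(A)$. -/

import Mathlib

open MeasureTheory ENNReal

variable {α : Type*} [MeasurableSpace α]

/-- The `γ`-median of `u` over `A`:
`m_u^γ(A) = inf { a ∈ ℝ : μ (A ∩ {u > a}) < γ * μ A }`. -/
noncomputable def med (μ : Measure α) (γ : ℝ) (u : α → ℝ) (A : Set α) : ℝ :=
  sInf {a : ℝ | μ (A ∩ {x | a < u x}) < ENNReal.ofReal γ * μ A}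

lemma medSet_nonempty (μ : Measure α) (A : Set α) (hA : μ A ≠ ⊤) (hA0 : μ A ≠ 0)
    (f : α → ℝ) (hf : Measurable f) (γ : ℝ) (hγ : 0 < γ) :
    {a : ℝ | μ (A ∩ {x | a < f x}) < ENNReal.ofReal γ * μ A}.Nonempty := by
  have key : ∀ a : ℝ, μ (A ∩ {x | a < f x}) = (μ.restrict A) {x | a < f x} := by
    intro a
    rw [Measure.restrict_apply (measurableSet_lt measurable_const hf), Set.inter_comm]
  have hmono : Antitone (fun n : ℕ => {x | (n : ℝ) < f x}) := by
    intro n m hnm x hx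
    simp only [Set.mem_setOf_eq] at *
    have : (n : ℝ) ≤ m := Nat.cast_le.mpr hnm
    linarith
  have hempty : (⋂ n : ℕ, {x | (n : ℝ) < f x}) = ∅ := by
    ext x
    simp only [Set.mem_iInter, Set.mem_setOf_eq, Set.mem_empty_iff_false, iff_false, not_forall,
      not_lt]
    obtain ⟨n, hn⟩ := exists_nat_gt (f x)
    exact ⟨n, hn.le⟩
  have htend : Filter.Tendsto (fun n : ℕ => (μ.restrict A) {x | (n : ℝ) < f x})
      Filter.atTop (nhds 0) := by
    have := tendsto_measure_iInter_atTop (μ := μ.restrict A)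
      (s := fun n : ℕ => {x | (n : ℝ) < f x})
      (fun n => (measurableSet_lt measurable_const hf).nullMeasurableSet) hmono
      ⟨0, by
        refine ne_top_of_le_ne_top ?_ (measure_mono (Set.subset_univ _))
        rwa [Measure.restrict_apply_univ]⟩
    rwa [hempty, measure_empty] at this
  have hpos : 0 < ENNReal.ofReal γ * μ A := by
    apply ENNReal.mul_pos
    · simpa using hγ
    · exact hA0
  obtain ⟨n, hn⟩ := (htend.eventually_lt_const hpos).exists
  exact ⟨n, by rw [Set.mem_setOf_eq, key]; exact hn⟩

lemma medSet_bddBelow (μ : Measure α) (A : Set α) (hA : μ A ≠ ⊤) (hA0 : μ A ≠ 0)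
    (f : α → ℝ) (γ : ℝ) (hγ' : γ ≤ 1 / 2) :
    BddBelow {a : ℝ | μ (A ∩ {x | a < f x}) < ENNReal.ofReal γ * μ A} := by
  have hmono : Monotone (fun n : ℕ => A ∩ {x | -(n : ℝ) < f x}) := by
    intro n m hnm x hx
    refine ⟨hx.1, ?_⟩
    have : (n : ℝ) ≤ m := Nat.cast_le.mpr hnm
    have := hx.2
    simp only [Set.mem_setOf_eq] at *
    linarith
  have hunion : (⋃ n : ℕ, A ∩ {x | -(n : ℝ) < f x}) = A := by
    ext x
    simp only [Set.mem_iUnion, Set.mem_inter_iff, Set.mem_setOf_eq]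
    constructor
    · rintro ⟨n, hx, _⟩; exact hx
    · intro hx
      obtain ⟨n, hn⟩ := exists_nat_gt (-f x)
      exact ⟨n, hx, by linarith⟩
  have htend := tendsto_measure_iUnion_atTop (μ := μ) hmono
  rw [hunion] at htend
  have hlt : ENNReal.ofReal γ * μ A < μ A := by
    have h1 : ENNReal.ofReal γ < 1 := by
      apply ENNReal.ofReal_lt_one.mpr; linarith
    calc ENNReal.ofReal γ * μ A < 1 * μ A := ENNReal.mul_lt_mul_left hA0 hA h1
      _ = μ A := one_mul _
  obtain ⟨n, hn⟩ := (htend.eventually_const_lt hlt).exists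
  refine ⟨-(n : ℝ), fun b hb => ?_⟩
  by_contra hb'
  push_neg at hb'
  have hsub : A ∩ {x | -(n : ℝ) < f x} ⊆ A ∩ {x | b < f x} := by
    intro x hx
    refine ⟨hx.1, ?_⟩
    have := hx.2
    simp only [Set.mem_setOf_eq] at *
    linarith
  exact absurd (lt_of_le_of_lt (le_trans (le_of_lt hn) (measure_mono hsub)) hb) (lt_irrefl _)

theorem med_dist_to_med (μ : Measure α) (A : Set α) (hA : μ A ≠ ⊤) (hA0 : μ A ≠ 0)
    (u : α → ℝ) (hu : Measurable u) (γ : ℝ) (hγ : 0 < γ) (hγ' : γ ≤ 1 / 2) :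
    med μ γ (fun x => |u x - med μ γ u A|) A
      ≤ 2 * ⨅ c : ℝ, med μ γ (fun x => |u x - c|) A := by
  set m := med μ γ u A with hm
  set S : (α → ℝ) → Set ℝ :=
    fun f => {a : ℝ | μ (A ∩ {x | a < f x}) < ENNReal.ofReal γ * μ A} with hS
  have habs : ∀ c : ℝ, Measurable (fun x => |u x - c|) := fun c =>
    (hu.sub measurable_const).abs
  have hne : ∀ c : ℝ, (S (fun x => |u x - c|)).Nonempty := fun c =>
    medSet_nonempty μ A hA hA0 _ (habs c) γ hγ
  have hbdd : ∀ f : α → ℝ, BddBelow (S f) := fun f =>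
    medSet_bddBelow μ A hA hA0 f γ hγ'
  have hneu : (S u).Nonempty := medSet_nonempty μ A hA hA0 u hu γ hγ
  have hmed : ∀ f : α → ℝ, med μ γ f A = sInf (S f) := fun f => rfl
  -- key lemma: |m - c| ≤ med μ γ (|u - c|) A
  have hkey : ∀ c : ℝ, |m - c| ≤ med μ γ (fun x => |u x - c|) A := by
    intro c
    rw [hmed]
    refine le_csInf (hne c) fun a ha => ?_
    rw [abs_sub_le_iff]
    constructor
    · -- m ≤ c + a, i.e. m - c ≤ a
      have hmem : (c + a) ∈ S u := by
        refine lt_of_le_of_lt (measure_mono ?_) ha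
        intro x hx
        refine ⟨hx.1, ?_⟩
        have := hx.2
        simp only [Set.mem_setOf_eq] at *
        have : a < u x - c := by linarith
        exact lt_of_lt_of_le this (le_abs_self _)
      have := csInf_le (hbdd u) hmem
      rw [hm, hmed u]
      linarith [this]
    · -- c - m ≤ a
      have hcm : c - a ≤ m := by
        rw [hm, hmed u]
        refine le_csInf hneu fun b hb => ?_
        by_contra hb'
        push_neg at hb'
        have hsub : A ⊆ (A ∩ {x | b < u x}) ∪ (A ∩ {x | a < |u x - c|}) := by
          intro x hx
          by_cases h : b < u x
          · exact Or.inl ⟨hx, h⟩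
          · push_neg at h
            refine Or.inr ⟨hx, ?_⟩
            simp only [Set.mem_setOf_eq]
            have : a < c - u x := by linarith
            calc a < c - u x := this
              _ ≤ |u x - c| := by rw [abs_sub_comm]; exact le_abs_self _
        have h1 : μ A < ENNReal.ofReal γ * μ A + ENNReal.ofReal γ * μ A :=
          lt_of_le_of_lt (le_trans (measure_mono hsub) (measure_union_le _ _))
            (ENNReal.add_lt_add hb ha)
        have h2 : ENNReal.ofReal γ * μ A + ENNReal.ofReal γ * μ A ≤ μ A := by
          rw [← add_mul, ← ENNReal.ofReal_add hγ.le hγ.le]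
          calc ENNReal.ofReal (γ + γ) * μ A ≤ 1 * μ A := by
                apply mul_le_mul_left
                rw [show (1 : ℝ≥0∞) = ENNReal.ofReal 1 by simp]
                exact ENNReal.ofReal_le_ofReal (by linarith)
            _ = μ A := one_mul _
        exact absurd (lt_of_lt_of_le h1 h2) (lt_irrefl _)
      linarith
  -- monotonicity: med (|u - m|) ≤ med (|u - c|) + |m - c|
  have hmono : ∀ c : ℝ, med μ γ (fun x => |u x - m|) A
      ≤ med μ γ (fun x => |u x - c|) A + |m - c| := by
    intro c
    have h1 : ∀ a ∈ S (fun x => |u x - c|),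
        med μ γ (fun x => |u x - m|) A ≤ a + |m - c| := by
      intro a ha
      rw [hmed]
      refine csInf_le (hbdd _) ?_
      refine lt_of_le_of_lt (measure_mono ?_) ha
      intro x hx
      refine ⟨hx.1, ?_⟩
      have := hx.2
      simp only [Set.mem_setOf_eq] at *
      have htri : |u x - m| ≤ |u x - c| + |c - m| := abs_sub_le _ _ _
      have : |c - m| = |m - c| := abs_sub_comm c m
      linarith
    have h2 : med μ γ (fun x => |u x - m|) A - |m - c|
        ≤ med μ γ (fun x => |u x - c|) A := by
      rw [hmed (fun x => |u x - c|)]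
      exact le_csInf (hne c) fun a ha => by linarith [h1 a ha]
    linarith
  -- conclude
  have hfinal : ∀ c : ℝ, med μ γ (fun x => |u x - m|) A
      ≤ 2 * med μ γ (fun x => |u x - c|) A := by
    intro c
    have := hmono c
    have := hkey c
    linarith
  have hlow : ∀ c : ℝ, med μ γ (fun x => |u x - m|) A / 2
      ≤ med μ γ (fun x => |u x - c|) A := fun c => by linarith [hfinal c]
  have := le_ciInf hlow
  linarith
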